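/- Let φ : [0,T] → X be three times continuously differentiable into a Banach space X, let 0 < Δt ≤ T, t₀ = 0, t₁ = Δt, φ^{1/2} := (φ(t₁)+φ(t₀))/2 and ∂φ^{1/2} := (φ(t₁)-φ(t₀))/Δt. Then ‖(2/Δt)(∂φ^{1/2} - φ'(0)) - (φ''(t₁)+φ''(t₀))/2‖ ≤ Δt · sup_{t∈[0,t₁]} ‖φ'''(t)‖. -/

import Mathlib

open Set

theorem stmt_10 {X : Type*} [NormedAddCommGroup X] [NormedSpace ℝ X]
    (T Δt : ℝ) (hΔt : 0 < Δt) (hΔtT : Δt ≤ T)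
    (φ : ℝ → X) (hφ : ContDiff ℝ 3 φ) :
    ‖(2 / Δt) • (Δt⁻¹ • (φ Δt - φ 0) - deriv φ 0)
        - (2 : ℝ)⁻¹ • (iteratedDeriv 2 φ Δt + iteratedDeriv 2 φ 0)‖
      ≤ Δt * ⨆ s : Set.Icc (0 : ℝ) Δt, ‖iteratedDeriv 3 φ (s : ℝ)‖ := by
  set M : ℝ := ⨆ s : Set.Icc (0 : ℝ) Δt, ‖iteratedDeriv 3 φ (s : ℝ)‖ with hM
  -- basic differentiability
  have hd0 : Differentiable ℝ φ := hφ.differentiable (by norm_num)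
  have hd1 : Differentiable ℝ (deriv φ) := by
    have := hφ.differentiable_iteratedDeriv 1 (by norm_num)
    rwa [iteratedDeriv_one] at this
  have hd2 : Differentiable ℝ (iteratedDeriv 2 φ) :=
    hφ.differentiable_iteratedDeriv 2 (by norm_num)
  have h2eq : iteratedDeriv 2 φ = deriv (deriv φ) := by
    rw [iteratedDeriv_succ, iteratedDeriv_one]
  have h3eq : iteratedDeriv 3 φ = deriv (iteratedDeriv 2 φ) := iteratedDeriv_succ
  have hD1 : ∀ t, HasDerivAt φ (deriv φ t) t := fun t => (hd0 t).hasDerivAt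
  have hD2 : ∀ t, HasDerivAt (deriv φ) (iteratedDeriv 2 φ t) t := fun t => by
    rw [h2eq]; exact (hd1 t).hasDerivAt
  have hD3 : ∀ t, HasDerivAt (iteratedDeriv 2 φ) (iteratedDeriv 3 φ t) t := fun t => by
    rw [h3eq]; exact (hd2 t).hasDerivAt
  -- the supremum bounds the third derivative
  have hbdd : BddAbove (Set.range fun s : Set.Icc (0 : ℝ) Δt => ‖iteratedDeriv 3 φ (s : ℝ)‖) := by
    have hcont : Continuous (iteratedDeriv 3 φ) := hφ.continuous_iteratedDeriv 3 (by norm_num)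
    have hsub : Set.range (fun s : Set.Icc (0 : ℝ) Δt => ‖iteratedDeriv 3 φ (s : ℝ)‖)
        ⊆ (fun t => ‖iteratedDeriv 3 φ t‖) '' Set.Icc 0 Δt := by
      rintro _ ⟨s, rfl⟩; exact ⟨s, s.2, rfl⟩
    exact ((isCompact_Icc.image (hcont.norm)).bddAbove).mono hsub
  have hMb : ∀ t ∈ Icc (0 : ℝ) Δt, ‖iteratedDeriv 3 φ t‖ ≤ M := fun t ht =>
    le_ciSup hbdd (⟨t, ht⟩ : Set.Icc (0 : ℝ) Δt)
  have hM0 : 0 ≤ M :=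
    le_trans (norm_nonneg _) (hMb 0 ⟨le_refl 0, hΔt.le⟩)
  -- second derivative variation bound
  have hsec : ∀ t ∈ Icc (0 : ℝ) Δt, ‖iteratedDeriv 2 φ t - iteratedDeriv 2 φ 0‖ ≤ M * t := by
    intro t ht
    have := norm_image_sub_le_of_norm_deriv_right_le_segment (a := 0) (b := Δt)
      (f := iteratedDeriv 2 φ) (f' := iteratedDeriv 3 φ)
      (hd2.continuous.continuousOn)
      (fun x _ => (hD3 x).hasDerivWithinAt)
      (fun x hx => hMb x (Ico_subset_Icc_self hx)) t ht
    simpa using this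
  -- first remainder: g1 t = φ' t - φ' 0 - t • φ'' 0
  set g1 : ℝ → X := fun t => deriv φ t - deriv φ 0 - t • iteratedDeriv 2 φ 0 with hg1def
  have hg1deriv : ∀ t, HasDerivAt g1 (iteratedDeriv 2 φ t - iteratedDeriv 2 φ 0) t := by
    intro t
    have h1 : HasDerivAt (fun s : ℝ => s • iteratedDeriv 2 φ 0)
        ((1 : ℝ) • iteratedDeriv 2 φ 0) t := (hasDerivAt_id t).smul_const _
    rw [one_smul] at h1
    exact ((hD2 t).sub_const (deriv φ 0)).sub h1
  have hg1 : ∀ t ∈ Icc (0 : ℝ) Δt, ‖g1 t‖ ≤ M * t ^ 2 / 2 := by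
    have hB : ∀ x : ℝ, HasDerivAt (fun t => M * t ^ 2 / 2) (M * x) x := by
      intro x
      have := ((hasDerivAt_pow 2 x).const_mul M).div_const 2
      refine this.congr_deriv ?_
      ring
    intro t ht
    refine image_norm_le_of_norm_deriv_right_le_deriv_boundary (a := 0) (b := Δt)
      (f := g1) (f' := fun x => iteratedDeriv 2 φ x - iteratedDeriv 2 φ 0)
      ?_ (fun x _ => (hg1deriv x).hasDerivWithinAt) ?_ hB
      (fun x hx => by simpa using hsec x (Ico_subset_Icc_self hx)) ht
    · exact (Differentiable.continuous (fun x => (hg1deriv x).differentiableAt)).continuousOn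
    · simp [hg1def]
  -- second remainder: g t = φ t - φ 0 - t • φ' 0 - (t^2/2) • φ'' 0
  set g : ℝ → X := fun t => φ t - φ 0 - t • deriv φ 0 - (t ^ 2 / 2) • iteratedDeriv 2 φ 0
    with hgdef
  have hgderiv : ∀ t, HasDerivAt g (g1 t) t := by
    intro t
    have h1 : HasDerivAt (fun s : ℝ => s • deriv φ 0) ((1 : ℝ) • deriv φ 0) t :=
      (hasDerivAt_id t).smul_const _
    rw [one_smul] at h1
    have h2 : HasDerivAt (fun s : ℝ => (s ^ 2 / 2) • iteratedDeriv 2 φ 0)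
        (t • iteratedDeriv 2 φ 0) t := by
      have hr : HasDerivAt (fun s : ℝ => s ^ 2 / 2) t t := by
        have := (hasDerivAt_pow 2 t).div_const 2
        refine this.congr_deriv ?_; ring
      simpa using hr.smul_const (iteratedDeriv 2 φ 0)
    exact (((hD1 t).sub_const (φ 0)).sub h1).sub h2
  have hg : ‖g Δt‖ ≤ M * Δt ^ 3 / 6 := by
    have hB : ∀ x : ℝ, HasDerivAt (fun t => M * t ^ 3 / 6) (M * x ^ 2 / 2) x := by
      intro x
      have := ((hasDerivAt_pow 3 x).const_mul M).div_const 6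
      refine this.congr_deriv ?_
      ring
    refine image_norm_le_of_norm_deriv_right_le_deriv_boundary (a := 0) (b := Δt)
      (f := g) (f' := g1)
      ?_ (fun x _ => (hgderiv x).hasDerivWithinAt) ?_ hB
      (fun x hx => hg1 x (Ico_subset_Icc_self hx)) (right_mem_Icc.2 hΔt.le)
    · exact (Differentiable.continuous (fun x => (hgderiv x).differentiableAt)).continuousOn
    · simp [hgdef]
  -- algebraic identity
  have hΔt' : Δt ≠ 0 := hΔt.ne'
  have key : (2 / Δt) • (Δt⁻¹ • (φ Δt - φ 0) - deriv φ 0)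
      - (2 : ℝ)⁻¹ • (iteratedDeriv 2 φ Δt + iteratedDeriv 2 φ 0)
      = (2 / Δt ^ 2) • g Δt
        - (2 : ℝ)⁻¹ • (iteratedDeriv 2 φ Δt - iteratedDeriv 2 φ 0) := by
    simp only [hgdef]
    match_scalars <;> field_simp <;> ring
  rw [key]
  calc ‖(2 / Δt ^ 2) • g Δt - (2 : ℝ)⁻¹ • (iteratedDeriv 2 φ Δt - iteratedDeriv 2 φ 0)‖
      ≤ ‖(2 / Δt ^ 2) • g Δt‖ + ‖(2 : ℝ)⁻¹ • (iteratedDeriv 2 φ Δt - iteratedDeriv 2 φ 0)‖ :=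
        norm_sub_le _ _
    _ ≤ (2 / Δt ^ 2) * (M * Δt ^ 3 / 6) + (2 : ℝ)⁻¹ * (M * Δt) := by
        gcongr
        · rw [norm_smul, Real.norm_eq_abs, abs_of_pos (by positivity)]
          gcongr
        · rw [norm_smul, Real.norm_eq_abs, abs_of_pos (by norm_num)]
          gcongr
          exact hsec Δt (right_mem_Icc.2 hΔt.le)
    _ ≤ Δt * M := by
        have h1 : 2 / Δt ^ 2 * (M * Δt ^ 3 / 6) = M * Δt / 3 := by
          field_simp; ring
        rw [h1]
        nlinarith
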